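/- arXiv:2505.19074 — 2 statements merged into one kernel-verified Lean document; each statement's English description precedes it below -/
import Mathlib

section
/- Let 1 < p < q and let h: (0,1] → (0,∞) be a function. Suppose there is a constant C > 0 such that h(r)/h(R) ≤ C·(r/R)^q for all 0 < r < R ≤ 1. Then there is a constant C' (depending only on C, p, q) such that for all 0 < r < 1/2: (h(r)/r^p)^{1/(p-1)} · ∫_r^1 (ρ^p/h(ρ))^{1/(p-1)} dρ/ρ ≤ C'. In particular this quantity does not tend to infinity as r → 0. -/
open Real Set Filter

/-- If `1 < p < q` and `h : (0,1] → (0,∞)` satisfies `h(r)/h(R) ≤ C (r/R)^q` for all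
`0 < r < R ≤ 1`, then there is `C'` depending only on `C`, `p`, `q` such that
`(h(r)/r^p)^{1/(p-1)} ∫_r^1 (ρ^p/h(ρ))^{1/(p-1)} dρ/ρ ≤ C'` for `0 < r < 1/2`;
in particular this quantity does not tend to `∞` as `r → 0⁺`. -/
theorem upper_volume_bound_gives_boundedness (p q C : ℝ) (hp : 1 < p) (hpq : p < q)
    (hC : 0 < C) :
    ∃ C' : ℝ, 0 < C' ∧
      ∀ h : ℝ → ℝ, (∀ r ∈ Set.Ioc (0:ℝ) 1, 0 < h r) →
        (∀ r R : ℝ, 0 < r → r < R → R ≤ 1 → h r / h R ≤ C * (r / R) ^ q) →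
        (∀ r : ℝ, 0 < r → r < 1 / 2 →
          (h r / r ^ p) ^ (1 / (p - 1)) *
            ∫ ρ in r..1, (ρ ^ p / h ρ) ^ (1 / (p - 1)) / ρ ≤ C') ∧
        ¬ Tendsto
            (fun r : ℝ =>
              (h r / r ^ p) ^ (1 / (p - 1)) *
                ∫ ρ in r..1, (ρ ^ p / h ρ) ^ (1 / (p - 1)) / ρ)
            (nhdsWithin 0 (Set.Ioi 0)) atTop := by
  have hp1 : (0:ℝ) < p - 1 := by linarith
  set e : ℝ := 1 / (p - 1) with he
  have he0 : 0 < e := by positivity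
  set a : ℝ := (q - p) / (p - 1) with ha
  have ha0 : 0 < a := by apply div_pos <;> linarith
  set C₁ : ℝ := max C 1 with hC₁def
  have hC₁1 : (1:ℝ) ≤ C₁ := le_max_right _ _
  have hC₁0 : (0:ℝ) < C₁ := lt_of_lt_of_le one_pos hC₁1
  refine ⟨C₁ ^ e / a, by positivity, ?_⟩
  intro h hpos hdec
  have key : ∀ r : ℝ, 0 < r → r < 1 / 2 →
      (h r / r ^ p) ^ e * ∫ ρ in r..1, (ρ ^ p / h ρ) ^ e / ρ ≤ C₁ ^ e / a := by
    intro r hr0 hr2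
    have hr1 : r < 1 := by linarith
    have hhr : 0 < h r := hpos r ⟨hr0, by linarith⟩
    have hK0 : (0:ℝ) ≤ (h r / r ^ p) ^ e := by positivity
    by_cases hint : IntervalIntegrable (fun ρ : ℝ => (ρ ^ p / h ρ) ^ e / ρ)
        MeasureTheory.volume r 1
    · set D : ℝ := (C₁ * r ^ q / h r) ^ e with hD
      have hD0 : 0 < D := by positivity
      -- pointwise bound on [r,1]
      have hfg : ∀ ρ ∈ Icc r 1, (ρ ^ p / h ρ) ^ e / ρ ≤ D * ρ ^ (-a - 1) := by
        intro ρ hρ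
        have hρ0 : 0 < ρ := lt_of_lt_of_le hr0 hρ.1
        have hhρ : 0 < h ρ := hpos ρ ⟨hρ0, hρ.2⟩
        have hbase : ρ ^ p / h ρ ≤ C₁ * (r / ρ) ^ q * ρ ^ p / h r := by
          have h1 : h r / h ρ ≤ C₁ * (r / ρ) ^ q := by
            rcases eq_or_lt_of_le hρ.1 with heq | hlt
            · subst heq
              rw [div_self hhr.ne', div_self hρ0.ne', Real.one_rpow, mul_one]
              exact hC₁1
            · calc h r / h ρ ≤ C * (r / ρ) ^ q := hdec r ρ hr0 hlt hρ.2
                _ ≤ C₁ * (r / ρ) ^ q := by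
                    apply mul_le_mul_of_nonneg_right (le_max_left _ _) (by positivity)
          have h2 : 1 / h ρ ≤ C₁ * (r / ρ) ^ q / h r := by
            rw [div_le_div_iff₀ hhρ hhr]
            calc 1 * h r = h r / h ρ * h ρ := by field_simp
              _ ≤ C₁ * (r / ρ) ^ q * h ρ := by
                  apply mul_le_mul_of_nonneg_right h1 hhρ.le
          calc ρ ^ p / h ρ = ρ ^ p * (1 / h ρ) := by ring
            _ ≤ ρ ^ p * (C₁ * (r / ρ) ^ q / h r) := by
                apply mul_le_mul_of_nonneg_left h2 (by positivity)
            _ = C₁ * (r / ρ) ^ q * ρ ^ p / h r := by ring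
        have h3 : (ρ ^ p / h ρ) ^ e ≤ (C₁ * (r / ρ) ^ q * ρ ^ p / h r) ^ e :=
          Real.rpow_le_rpow (by positivity) hbase he0.le
        have h4 : (C₁ * (r / ρ) ^ q * ρ ^ p / h r) ^ e / ρ = D * ρ ^ (-a - 1) := by
          have hrρq : (r / ρ) ^ q = r ^ q * ρ ^ (-q) := by
            rw [Real.div_rpow hr0.le hρ0.le, Real.rpow_neg hρ0.le, div_eq_mul_inv]
          have hsplit : C₁ * (r / ρ) ^ q * ρ ^ p / h r
              = (C₁ * r ^ q / h r) * ρ ^ (p - q) := by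
            rw [hrρq]
            have h5 : ρ ^ (p - q) = ρ ^ (-q) * ρ ^ p := by
              rw [← Real.rpow_add hρ0]; ring_nf
            rw [h5]; ring
          rw [hsplit, Real.mul_rpow (by positivity) (by positivity),
            ← Real.rpow_mul hρ0.le]
          have hexp : (p - q) * e = -a := by
            rw [ha, he]; field_simp; ring
          rw [hexp, div_eq_mul_inv, mul_assoc, ← Real.rpow_neg_one ρ,
            ← Real.rpow_add hρ0, hD, show (-a) + -1 = -a - 1 from by ring]
        calc (ρ ^ p / h ρ) ^ e / ρ ≤ (C₁ * (r / ρ) ^ q * ρ ^ p / h r) ^ e / ρ := by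
              gcongr
          _ = D * ρ ^ (-a - 1) := h4
      have hg_int : IntervalIntegrable (fun ρ : ℝ => D * ρ ^ (-a - 1))
          MeasureTheory.volume r 1 := by
        apply IntervalIntegrable.const_mul
        apply intervalIntegral.intervalIntegrable_rpow
        right
        rw [Set.uIcc_of_le hr1.le]
        intro hmem
        exact absurd hmem.1 (not_le.mpr hr0)
      have hmono := intervalIntegral.integral_mono_on hr1.le hint hg_int hfg
      have hgval : (∫ ρ in r..1, D * ρ ^ (-a - 1))
          = D * ((1 - r ^ (-a)) / (-a)) := by
        rw [intervalIntegral.integral_const_mul, integral_rpow]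
        · norm_num
        · right
          constructor
          · intro hcon
            have : a = 0 := by linarith [sub_eq_iff_eq_add.mp hcon]
            linarith
          · rw [Set.uIcc_of_le hr1.le]
            intro hmem
            exact absurd hmem.1 (not_le.mpr hr0)
      have hub : (h r / r ^ p) ^ e * (D * ((1 - r ^ (-a)) / (-a))) ≤ C₁ ^ e / a := by
        have hKD : (h r / r ^ p) ^ e * D = C₁ ^ e * r ^ a := by
          rw [hD, ← Real.mul_rpow (by positivity) (by positivity)]
          have hbase : h r / r ^ p * (C₁ * r ^ q / h r) = C₁ * r ^ (q - p) := by
            rw [Real.rpow_sub hr0]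
            field_simp
          rw [hbase, Real.mul_rpow hC₁0.le (by positivity), ← Real.rpow_mul hr0.le]
          congr 2
          rw [ha, he]
          field_simp
        have hra : r ^ a * ((1 - r ^ (-a)) / (-a)) ≤ 1 / a := by
          have hr_a : r ^ a * r ^ (-a) = 1 := by
            rw [← Real.rpow_add hr0]
            simp
          have hstep : r ^ a * ((1 - r ^ (-a)) / (-a))
              = (r ^ a - r ^ a * r ^ (-a)) / (-a) := by ring
          have h7 : (r ^ a - 1) / (-a) = (1 - r ^ a) / a := by
            rw [div_neg, ← neg_div, neg_sub]
          rw [hstep, hr_a, h7]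
          have h8 : 0 < r ^ a := Real.rpow_pos_of_pos hr0 a
          exact (div_le_div_iff_of_pos_right ha0).mpr (by linarith)
        calc (h r / r ^ p) ^ e * (D * ((1 - r ^ (-a)) / (-a)))
            = ((h r / r ^ p) ^ e * D) * ((1 - r ^ (-a)) / (-a)) := by ring
          _ = C₁ ^ e * (r ^ a * ((1 - r ^ (-a)) / (-a))) := by rw [hKD]; ring
          _ ≤ C₁ ^ e * (1 / a) := by
              apply mul_le_mul_of_nonneg_left hra (by positivity)
          _ = C₁ ^ e / a := by ring
      calc (h r / r ^ p) ^ e * ∫ ρ in r..1, (ρ ^ p / h ρ) ^ e / ρ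
          ≤ (h r / r ^ p) ^ e * ∫ ρ in r..1, D * ρ ^ (-a - 1) := by
            apply mul_le_mul_of_nonneg_left hmono hK0
        _ = (h r / r ^ p) ^ e * (D * ((1 - r ^ (-a)) / (-a))) := by rw [hgval]
        _ ≤ C₁ ^ e / a := hub
    · rw [intervalIntegral.integral_undef hint, mul_zero]
      positivity
  refine ⟨key, ?_⟩
  intro htend
  have h1 := htend.eventually (eventually_ge_atTop (C₁ ^ e / a + 1))
  have h2 : Set.Ioo (0:ℝ) (1 / 2) ∈ nhdsWithin 0 (Set.Ioi 0) :=
    Ioo_mem_nhdsGT_of_mem (by norm_num)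
  obtain ⟨r, hr1, hr2⟩ := (h1.and (eventually_of_mem h2 fun x hx => hx)).exists
  have := key r hr2.1 hr2.2
  linarith
end

section
/- Let 1 < p < ∞ and let h: (0,1] → (0,∞) be nondecreasing and doubling in the sense that h(2t) ≤ C_D · h(t) whenever 0 < t ≤ 1/2. Suppose there exist sequences 0 < r_j < R_j ≤ 1/2 with R_j → 0 and h(r_j)/h(R_j) ≥ j·(r_j/R_j)^p for all j ≥ 1. Then limsup_{j→∞} (h(r_j)/r_j^p)^{1/(p-1)} · ∫_{r_j}^1 (ρ^p/h(ρ))^{1/(p-1)} dρ/ρ = ∞. -/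
open Real Set Filter MeasureTheory intervalIntegral

/-- If `1 < p`, `h : (0,1] → (0,∞)` is nondecreasing and doubling, and there are sequences
`0 < r_j < R_j ≤ 1/2` with `R_j → 0` and `h(r_j)/h(R_j) ≥ j (r_j/R_j)^p`, then
`limsup_j (h(r_j)/r_j^p)^{1/(p-1)} ∫_{r_j}^1 (ρ^p/h(ρ))^{1/(p-1)} dρ/ρ = ∞`. -/
theorem failure_of_lower_exponent_gives_limsup_infinite (p C_D : ℝ) (hp : 1 < p)
    (h : ℝ → ℝ) (hpos : ∀ t ∈ Set.Ioc (0:ℝ) 1, 0 < h t)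
    (hmono : MonotoneOn h (Set.Ioc (0:ℝ) 1))
    (hdoub : ∀ t : ℝ, 0 < t → t ≤ 1 / 2 → h (2 * t) ≤ C_D * h t)
    (r R : ℕ → ℝ)
    (hrR : ∀ j : ℕ, 0 < r j ∧ r j < R j ∧ R j ≤ 1 / 2)
    (hR0 : Tendsto R atTop (nhds 0))
    (hratio : ∀ j : ℕ, 1 ≤ j → (j : ℝ) * (r j / R j) ^ p ≤ h (r j) / h (R j)) :
    Filter.limsup
      (fun j : ℕ =>
        (((h (r j) / (r j) ^ p) ^ (1 / (p - 1)) *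
          ∫ ρ in (r j)..1, (ρ ^ p / h ρ) ^ (1 / (p - 1)) / ρ : ℝ) : EReal))
      Filter.atTop = ⊤ := by
  set e : ℝ := 1 / (p - 1) with he_def
  have hp0 : 0 < p := lt_trans one_pos hp
  have hp1 : 0 < p - 1 := by linarith
  have he : 0 < e := by rw [he_def]; positivity
  set f : ℝ → ℝ := fun ρ => (ρ ^ p / h ρ) ^ e / ρ with hf_def
  -- C_D > 0
  have hCD : 0 < C_D := by
    have h1 : h (2 * (1/4 : ℝ)) ≤ C_D * h (1/4) := hdoub (1/4) (by norm_num) (by norm_num)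
    have h2 : (0:ℝ) < h (2 * (1/4 : ℝ)) := hpos _ (by norm_num)
    have h3 : (0:ℝ) < h (1/4) := hpos _ (by norm_num)
    nlinarith
  -- the main pointwise lower bound
  have key : ∀ j : ℕ, 1 ≤ j →
      ((j:ℝ) / C_D) ^ e / 2 ≤ (h (r j) / (r j) ^ p) ^ e * ∫ ρ in (r j)..1, f ρ := by
    intro j hj
    obtain ⟨hr, hrR', hR⟩ := hrR j
    have hR0' : 0 < R j := lt_trans hr hrR'
    have hR1 : R j ≤ 1 := hR.trans (by norm_num)
    have h2R1 : 2 * R j ≤ 1 := by linarith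
    have hr1 : r j ≤ 1 := le_trans hrR'.le hR1
    have hrmem : r j ∈ Set.Ioc (0:ℝ) 1 := ⟨hr, hr1⟩
    have hRmem : R j ∈ Set.Ioc (0:ℝ) 1 := ⟨hR0', hR1⟩
    have hhr : 0 < h (r j) := hpos _ hrmem
    have hhR : 0 < h (R j) := hpos _ hRmem
    -- nonnegativity of f on [r j, 1]
    have hfnn : ∀ ρ ∈ Set.Icc (r j) 1, 0 ≤ f ρ := by
      intro ρ hρ
      have hρ0 : 0 < ρ := lt_of_lt_of_le hr hρ.1
      have hhρ : 0 < h ρ := hpos _ ⟨hρ0, hρ.2⟩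
      have : (0:ℝ) ≤ (ρ ^ p / h ρ) ^ e := Real.rpow_nonneg (by positivity) e
      exact div_nonneg this hρ0.le
    -- integrability of f on (r j, 1]
    have hIntAll : IntegrableOn f (Set.Ioc (r j) 1) volume := by
      have hmeas : AEMeasurable h (volume.restrict (Set.Ioc (r j) 1)) := by
        have := aemeasurable_restrict_of_monotoneOn (μ := volume) measurableSet_Ioc hmono
        exact this.mono_measure
          (Measure.restrict_mono (Set.Ioc_subset_Ioc hr.le le_rfl) le_rfl)
      have hfm : AEMeasurable f (volume.restrict (Set.Ioc (r j) 1)) :=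
        (((measurable_id.pow_const p).aemeasurable.div hmeas).pow_const _).div aemeasurable_id
      refine Integrable.mono' (g := fun _ => (1 / h (r j)) ^ e / r j)
        (integrableOn_const (by simp))
        hfm.aestronglyMeasurable ?_
      filter_upwards [ae_restrict_mem measurableSet_Ioc] with ρ hρ
      obtain ⟨hρa, hρ1⟩ := hρ
      have hρ0 : 0 < ρ := lt_trans hr hρa
      have hhρ : 0 < h ρ := hpos _ ⟨hρ0, hρ1⟩
      rw [Real.norm_of_nonneg (hfnn ρ ⟨hρa.le, hρ1⟩)]
      have h1 : ρ ^ p ≤ 1 := Real.rpow_le_one hρ0.le hρ1 hp0.le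
      have h2 : h (r j) ≤ h ρ := hmono hrmem ⟨hρ0, hρ1⟩ hρa.le
      have h3 : ρ ^ p / h ρ ≤ 1 / h (r j) := div_le_div₀ (by norm_num) h1 hhr h2
      have h4 : (ρ ^ p / h ρ) ^ e ≤ (1 / h (r j)) ^ e :=
        Real.rpow_le_rpow (by positivity) h3 he.le
      exact div_le_div₀ (Real.rpow_nonneg (by positivity) e) h4 hr hρa.le
    have hInt : ∀ a b : ℝ, r j ≤ a → a ≤ b → b ≤ 1 → IntervalIntegrable f volume a b := by
      intro a b ha hab hb
      rw [intervalIntegrable_iff_integrableOn_Ioc_of_le hab]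
      exact hIntAll.mono_set (Set.Ioc_subset_Ioc ha hb)
    have I1 : IntervalIntegrable f volume (r j) (R j) := hInt _ _ le_rfl hrR'.le hR1
    have I2 : IntervalIntegrable f volume (R j) (2 * R j) :=
      hInt _ _ hrR'.le (by linarith) h2R1
    have I3 : IntervalIntegrable f volume (2 * R j) 1 := hInt _ _ (by linarith) h2R1 le_rfl
    -- pointwise lower bound on [R j, 2 R j]
    set X : ℝ := R j ^ p / (C_D * h (R j)) with hX_def
    have hXnn : 0 ≤ X := by rw [hX_def]; positivity
    set c : ℝ := X ^ e / (2 * R j) with hc_def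
    have hflow : ∀ ρ ∈ Set.Icc (R j) (2 * R j), c ≤ f ρ := by
      intro ρ hρ
      have hρ0 : 0 < ρ := lt_of_lt_of_le hR0' hρ.1
      have hρ1 : ρ ≤ 1 := hρ.2.trans h2R1
      have hhρ : 0 < h ρ := hpos _ ⟨hρ0, hρ1⟩
      have h1 : R j ^ p ≤ ρ ^ p := Real.rpow_le_rpow hR0'.le hρ.1 hp0.le
      have h2 : h ρ ≤ C_D * h (R j) := by
        have hmem2 : 2 * R j ∈ Set.Ioc (0:ℝ) 1 := ⟨by linarith, h2R1⟩
        calc h ρ ≤ h (2 * R j) := hmono ⟨hρ0, hρ1⟩ hmem2 hρ.2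
          _ ≤ C_D * h (R j) := hdoub _ hR0' hR
      have h3 : X ≤ ρ ^ p / h ρ := div_le_div₀ (by positivity) h1 hhρ h2
      have h4 : X ^ e ≤ (ρ ^ p / h ρ) ^ e := Real.rpow_le_rpow hXnn h3 he.le
      exact div_le_div₀ (Real.rpow_nonneg (by positivity) e) h4 hρ0 hρ.2
    -- lower bound for middle integral
    have hI2 : X ^ e / 2 ≤ ∫ ρ in (R j)..(2 * R j), f ρ := by
      have hconst : ∫ _ρ in (R j)..(2 * R j), c = (2 * R j - R j) * c := by
        rw [intervalIntegral.integral_const]; simp [smul_eq_mul]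
      have hmono' : (∫ _ρ in (R j)..(2 * R j), c) ≤ ∫ ρ in (R j)..(2 * R j), f ρ :=
        intervalIntegral.integral_mono_on (by linarith) intervalIntegrable_const I2 hflow
      have : (2 * R j - R j) * c = X ^ e / 2 := by
        rw [hc_def]; field_simp; ring
      linarith [hmono', hconst ▸ hmono']
    -- nonnegativity of outer pieces
    have hI1 : (0:ℝ) ≤ ∫ ρ in (r j)..(R j), f ρ :=
      intervalIntegral.integral_nonneg hrR'.le
        (fun u hu => hfnn u ⟨hu.1, hu.2.trans hR1⟩)
    have hI3 : (0:ℝ) ≤ ∫ ρ in (2 * R j)..1, f ρ :=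
      intervalIntegral.integral_nonneg h2R1
        (fun u hu => hfnn u ⟨le_trans hrR'.le (by linarith [hu.1]), hu.2⟩)
    have hsplit : (∫ ρ in (r j)..(R j), f ρ) + ((∫ ρ in (R j)..(2 * R j), f ρ)
          + ∫ ρ in (2 * R j)..1, f ρ) = ∫ ρ in (r j)..1, f ρ := by
      rw [integral_add_adjacent_intervals I2 I3, integral_add_adjacent_intervals I1 (I2.trans I3)]
    have hIntLow : X ^ e / 2 ≤ ∫ ρ in (r j)..1, f ρ := by linarith
    -- combine
    have hA : (0:ℝ) ≤ (h (r j) / (r j) ^ p) ^ e := Real.rpow_nonneg (by positivity) e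
    have step1 : (h (r j) / (r j) ^ p) ^ e * (X ^ e / 2) ≤
        (h (r j) / (r j) ^ p) ^ e * ∫ ρ in (r j)..1, f ρ :=
      mul_le_mul_of_nonneg_left hIntLow hA
    have hjX : (j:ℝ) / C_D ≤ (h (r j) / (r j) ^ p) * X := by
      have hra := hratio j hj
      rw [Real.div_rpow hr.le hR0'.le] at hra
      rw [← mul_div_assoc, div_le_div_iff₀ (by positivity) hhR] at hra
      rw [hX_def, div_mul_div_comm, div_le_div_iff₀ hCD (by positivity)]
      nlinarith [mul_le_mul_of_nonneg_right hra hCD.le]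
    have step2 : ((j:ℝ) / C_D) ^ e / 2 ≤ (h (r j) / (r j) ^ p) ^ e * (X ^ e / 2) := by
      have : ((j:ℝ) / C_D) ^ e ≤ ((h (r j) / (r j) ^ p) * X) ^ e :=
        Real.rpow_le_rpow (by positivity) hjX he.le
      rw [Real.mul_rpow (by positivity) hXnn] at this
      linarith [this]
    linarith
  -- real sequence tends to infinity
  have hTendLow : Tendsto (fun j : ℕ => ((j:ℝ) / C_D) ^ e / 2) atTop atTop := by
    apply Tendsto.atTop_div_const (by norm_num : (0:ℝ) < 2)
    exact (tendsto_rpow_atTop he).comp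
      (tendsto_natCast_atTop_atTop.atTop_div_const hCD)
  have hV : Tendsto
      (fun j : ℕ => (h (r j) / (r j) ^ p) ^ e * ∫ ρ in (r j)..1, f ρ) atTop atTop := by
    apply tendsto_atTop_mono' atTop ?_ hTendLow
    filter_upwards [eventually_ge_atTop 1] with j hj
    exact key j hj
  have hVE : Tendsto
      (fun j : ℕ => (((h (r j) / (r j) ^ p) ^ e * ∫ ρ in (r j)..1, f ρ : ℝ) : EReal))
      atTop (nhds ⊤) := by
    rw [EReal.tendsto_nhds_top_iff_real]
    intro x
    filter_upwards [hV.eventually (eventually_gt_atTop x)] with j hj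
    exact_mod_cast hj
  exact hVE.limsup_eq
end
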